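/- (Painlevé VI similarity ansatz for the H1 reduced system.) Fix integers n, m and μ ∈ ℝ. Let I ⊆ (0,∞) be an open interval, let S, S1, S2 be twice differentiable real functions on I, and set D := {(α,β) ∈ ℝ² : α > 0, β > 0, α ≠ β, α/β ∈ I}. Define u(α,β) := S(α/β)·(αβ)^μ, u1(α,β) := S1(α/β)·(αβ)^{1/2−μ}, u2(α,β) := S2(α/β)·(αβ)^{1/2−μ}. Then (u, u1, u2) satisfies the H1 reduced system Σ_H1(n,m) on D if and only if (S, S1, S2) satisfies the reduced ODE system (sysH1redPVI) on I ∖ {1}. -/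

import Mathlib

/-- Partial derivative with respect to the first variable. -/
noncomputable def pda (f : ℝ × ℝ → ℝ) (p : ℝ × ℝ) : ℝ :=
  deriv (fun x => f (x, p.2)) p.1

/-- Partial derivative with respect to the second variable. -/
noncomputable def pdb (f : ℝ × ℝ → ℝ) (p : ℝ × ℝ) : ℝ :=
  deriv (fun y => f (p.1, y)) p.2

/-- The H1 reduced system Σ_H1(n,m). -/
def SigmaH1 (n m : ℤ) (u u1 u2 : ℝ × ℝ → ℝ) (p : ℝ × ℝ) : Prop :=
  pdb u1 p = ((u1 p - u2 p) / (p.1 - p.2)) * ((m : ℝ) - (u1 p - u2 p) * pdb u p) ∧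
  pda u2 p = ((u1 p - u2 p) / (p.1 - p.2)) * ((n : ℝ) + (u1 p - u2 p) * pda u p) ∧
  pdb (pda u) p = (1 / (p.1 - p.2)) *
    (2 * (u1 p - u2 p) * pda u p * pdb u p + (n : ℝ) * pdb u p - (m : ℝ) * pda u p)

/-- The reduced ODE system (sysH1redPVI). -/
def sysH1redPVI (n m : ℤ) (μ : ℝ) (S S1 S2 : ℝ → ℝ) (y : ℝ) : Prop :=
  (1 - y) * (2 * y * deriv S1 y + (2 * μ - 1) * S1 y) =
      2 * ((m : ℝ) + Real.sqrt y * (y * deriv S y - μ * S y) * (S1 y - S2 y))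
        * (S1 y - S2 y) ∧
  (y - 1) * (2 * y * deriv S2 y - (2 * μ - 1) * S2 y) =
      2 * ((n : ℝ) * y + Real.sqrt y * (y * deriv S y + μ * S y) * (S1 y - S2 y))
        * (S1 y - S2 y) ∧
  (y - 1) * (y ^ 2 * deriv (deriv S) y + y * deriv S y - μ ^ 2 * S y) =
      2 * Real.sqrt y * (y * deriv S y + μ * S y) * (y * deriv S y - μ * S y)
        * (S1 y - S2 y)
        + (m : ℝ) * (y * deriv S y + μ * S y) + (n : ℝ) * y * (y * deriv S y - μ * S y)

private lemma aux_div_deriv {a b : ℝ} (hb : b ≠ 0) :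
    HasDerivAt (fun t : ℝ => a / t) (-(a / b ^ 2)) b := by
  have h := (hasDerivAt_inv hb).const_mul a
  refine h.congr_deriv ?_
  symm
  field_simp

private lemma aux_pow_fst {c a b : ℝ} (ha : 0 < a) (hb : 0 < b) :
    HasDerivAt (fun x : ℝ => (x * b) ^ c) (c * (a * b) ^ (c - 1) * b) a := by
  have h3 : HasDerivAt (fun x : ℝ => x * b) b a := by
    simpa using (hasDerivAt_id a).mul_const b
  exact (Real.hasDerivAt_rpow_const (Or.inl (mul_pos ha hb).ne')).comp a h3

private lemma aux_pow_snd {c a b : ℝ} (ha : 0 < a) (hb : 0 < b) :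
    HasDerivAt (fun t : ℝ => (a * t) ^ c) (c * (a * b) ^ (c - 1) * a) b := by
  have h3 : HasDerivAt (fun t : ℝ => a * t) a b := by
    simpa using (hasDerivAt_id b).const_mul a
  exact (Real.hasDerivAt_rpow_const (Or.inl (mul_pos ha hb).ne')).comp b h3

private lemma deriv_fst (f : ℝ → ℝ) (f' c x t : ℝ) (hx : 0 < x) (ht : 0 < t)
    (hf : HasDerivAt f f' (x / t)) :
    HasDerivAt (fun z => f (z / t) * (z * t) ^ c)
      ((x / t * f' + c * f (x / t)) * (x * t) ^ c / x) x := by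
  have h1 : HasDerivAt (fun z : ℝ => z / t) (1 / t) x := by
    simpa using (hasDerivAt_id x).div_const t
  have h2 : HasDerivAt (fun z => f (z / t)) (f' * (1 / t)) x := hf.comp x h1
  have raw := h2.mul (aux_pow_fst (c := c) hx ht)
  refine raw.congr_deriv ?_
  symm
  rw [Real.rpow_sub (mul_pos hx ht), Real.rpow_one]
  field_simp

private lemma deriv_snd (f : ℝ → ℝ) (f' c x t : ℝ) (hx : 0 < x) (ht : 0 < t)
    (hf : HasDerivAt f f' (x / t)) :
    HasDerivAt (fun z => f (x / z) * (x * z) ^ c)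
      (-(x / t * f' - c * f (x / t)) * (x * t) ^ c / t) t := by
  have h2 : HasDerivAt (fun z => f (x / z)) (f' * (-(x / t ^ 2))) t :=
    hf.comp t (aux_div_deriv ht.ne')
  have raw := h2.mul (aux_pow_snd (c := c) hx ht)
  refine raw.congr_deriv ?_
  symm
  rw [Real.rpow_sub (mul_pos hx ht), Real.rpow_one]
  field_simp
  ring

private lemma second_deriv_formula (S : ℝ → ℝ) (μ a b : ℝ) (ha : 0 < a) (hb : 0 < b)
    (hd1 : HasDerivAt S (deriv S (a / b)) (a / b))
    (hd2 : HasDerivAt (deriv S) (deriv (deriv S) (a / b)) (a / b)) :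
    HasDerivAt (fun t => (a / t * deriv S (a / t) + μ * S (a / t)) * (a * t) ^ μ / a)
      (-((a / b) ^ 2 * deriv (deriv S) (a / b) + a / b * deriv S (a / b)
          - μ ^ 2 * S (a / b)) * (a * b) ^ μ / (a * b)) b := by
  have h1 : HasDerivAt (fun t : ℝ => a / t) (-(a / b ^ 2)) b := aux_div_deriv hb.ne'
  have hq : HasDerivAt (fun t => a / t * deriv S (a / t) + μ * S (a / t))
      (-(a / b ^ 2) * deriv S (a / b) + a / b * (deriv (deriv S) (a / b) * -(a / b ^ 2))
        + μ * (deriv S (a / b) * -(a / b ^ 2))) b :=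
    (h1.mul (hd2.comp b h1)).add ((hd1.comp b h1).const_mul μ)
  have raw := (hq.mul (aux_pow_snd (c := μ) ha hb)).div_const a
  refine raw.congr_deriv ?_
  symm
  rw [Real.rpow_sub (mul_pos ha hb), Real.rpow_one]
  field_simp
  ring

private lemma scale_iff {X Y L R c d : ℝ} (hc : c ≠ 0) (hd : d ≠ 0)
    (h1 : c * X = d * L) (h2 : c * Y = d * R) : X = Y ↔ L = R := by
  constructor
  · intro h
    exact mul_left_cancel₀ hd (by rw [← h1, h, h2])
  · intro h
    exact mul_left_cancel₀ hc (by rw [h1, h2, h])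

private lemma key (n m : ℤ) (μ : ℝ) (I : Set ℝ) (hI : IsOpen I)
    (S S1 S2 : ℝ → ℝ)
    (hS : ContDiffOn ℝ 2 S I) (hS1 : ContDiffOn ℝ 2 S1 I) (hS2 : ContDiffOn ℝ 2 S2 I)
    (a b : ℝ) (ha : 0 < a) (hb : 0 < b) (hab : a ≠ b) (hyI : a / b ∈ I) :
    (SigmaH1 n m
        (fun q => S (q.1 / q.2) * (q.1 * q.2) ^ μ)
        (fun q => S1 (q.1 / q.2) * (q.1 * q.2) ^ (1 / 2 - μ))
        (fun q => S2 (q.1 / q.2) * (q.1 * q.2) ^ (1 / 2 - μ)) (a, b)) ↔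
    sysH1redPVI n m μ S S1 S2 (a / b) := by
  have hSd : ∀ z ∈ I, HasDerivAt S (deriv S z) z := fun z hz =>
    ((hS.differentiableOn (by norm_num)).differentiableAt (hI.mem_nhds hz)).hasDerivAt
  have hS1d : ∀ z ∈ I, HasDerivAt S1 (deriv S1 z) z := fun z hz =>
    ((hS1.differentiableOn (by norm_num)).differentiableAt (hI.mem_nhds hz)).hasDerivAt
  have hS2d : ∀ z ∈ I, HasDerivAt S2 (deriv S2 z) z := fun z hz =>
    ((hS2.differentiableOn (by norm_num)).differentiableAt (hI.mem_nhds hz)).hasDerivAt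
  have hSdd : ∀ z ∈ I, HasDerivAt (deriv S) (deriv (deriv S) z) z := fun z hz =>
    (((hS.deriv_of_isOpen (m := 1) hI (by norm_num)).differentiableOn
      (by norm_num)).differentiableAt (hI.mem_nhds hz)).hasDerivAt
  have hpda_u : ∀ x t : ℝ, 0 < x → 0 < t → x / t ∈ I →
      pda (fun q : ℝ × ℝ => S (q.1 / q.2) * (q.1 * q.2) ^ μ) (x, t)
        = (x / t * deriv S (x / t) + μ * S (x / t)) * (x * t) ^ μ / x :=
    fun x t hx ht hxt => (deriv_fst S (deriv S (x / t)) μ x t hx ht (hSd _ hxt)).deriv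
  have hpdb_u : pdb (fun q : ℝ × ℝ => S (q.1 / q.2) * (q.1 * q.2) ^ μ) (a, b)
      = -(a / b * deriv S (a / b) - μ * S (a / b)) * (a * b) ^ μ / b :=
    (deriv_snd S (deriv S (a / b)) μ a b ha hb (hSd _ hyI)).deriv
  have hpdb_u1 : pdb (fun q : ℝ × ℝ => S1 (q.1 / q.2) * (q.1 * q.2) ^ (1 / 2 - μ)) (a, b)
      = -(a / b * deriv S1 (a / b) - (1 / 2 - μ) * S1 (a / b)) * (a * b) ^ (1 / 2 - μ) / b :=
    (deriv_snd S1 (deriv S1 (a / b)) (1 / 2 - μ) a b ha hb (hS1d _ hyI)).deriv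
  have hpda_u2 : pda (fun q : ℝ × ℝ => S2 (q.1 / q.2) * (q.1 * q.2) ^ (1 / 2 - μ)) (a, b)
      = (a / b * deriv S2 (a / b) + (1 / 2 - μ) * S2 (a / b)) * (a * b) ^ (1 / 2 - μ) / a :=
    (deriv_fst S2 (deriv S2 (a / b)) (1 / 2 - μ) a b ha hb (hS2d _ hyI)).deriv
  have hpdbpda : pdb (pda (fun q : ℝ × ℝ => S (q.1 / q.2) * (q.1 * q.2) ^ μ)) (a, b)
      = -((a / b) ^ 2 * deriv (deriv S) (a / b) + a / b * deriv S (a / b)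
          - μ ^ 2 * S (a / b)) * (a * b) ^ μ / (a * b) := by
    have hev : (fun t => pda (fun q : ℝ × ℝ => S (q.1 / q.2) * (q.1 * q.2) ^ μ) (a, t))
        =ᶠ[nhds b] (fun t => (a / t * deriv S (a / t) + μ * S (a / t)) * (a * t) ^ μ / a) := by
      have h1 : ∀ᶠ t in nhds b, 0 < t := eventually_gt_nhds hb
      have h2 : ∀ᶠ t in nhds b, a / t ∈ I :=
        (continuousAt_const.div continuousAt_id hb.ne').eventually_mem (hI.mem_nhds hyI)
      filter_upwards [h1, h2] with t ht1 ht2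
      exact hpda_u a t ha ht1 ht2
    have hd := (second_deriv_formula S μ a b ha hb (hSd _ hyI) (hSdd _ hyI)).deriv
    calc pdb (pda (fun q : ℝ × ℝ => S (q.1 / q.2) * (q.1 * q.2) ^ μ)) (a, b)
        = deriv (fun t => pda (fun q : ℝ × ℝ => S (q.1 / q.2) * (q.1 * q.2) ^ μ) (a, t)) b :=
          rfl
      _ = _ := by rw [hev.deriv_eq, hd]
  -- algebraic preliminaries
  have hy0 : 0 < a / b := div_pos ha hb
  have hab0 : 0 < a * b := mul_pos ha hb
  have hs0 : 0 < Real.sqrt (a / b) := Real.sqrt_pos.mpr hy0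
  have hP0 : (0 : ℝ) < (a * b) ^ μ := Real.rpow_pos_of_pos hab0 μ
  have hKP : (a * b) ^ (1 / 2 - μ) * (a * b) ^ μ = Real.sqrt (a / b) * b := by
    rw [← Real.rpow_add hab0]
    have h12 : (1 / 2 - μ) + μ = (1 / 2 : ℝ) := by ring
    rw [h12, ← Real.sqrt_eq_rpow]
    rw [show a * b = (a / b) * b ^ 2 by field_simp]
    rw [Real.sqrt_mul hy0.le, Real.sqrt_sq hb.le]
  have hK : (a * b) ^ (1 / 2 - μ) = Real.sqrt (a / b) * b / (a * b) ^ μ :=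
    (eq_div_iff hP0.ne').mpr hKP
  set s := Real.sqrt (a / b) with hsdef
  have hss : a / b = s * s := (Real.mul_self_sqrt hy0.le).symm
  have ha_eq : a = s * s * b := by
    rw [← hss]; field_simp
  have hssb : s * s * b - b ≠ 0 := by
    rw [← ha_eq]; exact sub_ne_zero.mpr hab
  simp only [SigmaH1, sysH1redPVI]
  rw [hpdb_u1, hpda_u2, hpdb_u, hpda_u a b ha hb hyI, hpdbpda, hK]
  obtain ⟨P, hPp, hPdef⟩ : ∃ P : ℝ, 0 < P ∧ (a * b) ^ μ = P := ⟨_, hP0, rfl⟩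
  rw [hPdef]
  rw [hss, ha_eq]
  rw [Real.sqrt_mul_self hs0.le]
  have hs1 : s ^ 2 - 1 ≠ 0 := fun h => hssb (by linear_combination b * h)
  refine and_congr ?_ (and_congr ?_ ?_)
  · refine scale_iff (c := 2 * (s * s * b - b)) (d := s * b / P) ?_ ?_ ?_ ?_
    · exact mul_ne_zero two_ne_zero hssb
    · positivity
    · field_simp
      ring
    · field_simp
      ring
  · refine scale_iff (c := 2 * (s * s * b) * (s * s * b - b)) (d := s * b / P * b) ?_ ?_ ?_ ?_
    · exact mul_ne_zero (by positivity) hssb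
    · positivity
    · field_simp
      ring
    · field_simp
  · refine scale_iff (c := (s * s * b) * (s * s * b - b)) (d := -P) ?_ ?_ ?_ ?_
    · exact mul_ne_zero (by positivity) hssb
    · exact neg_ne_zero.mpr hPp.ne'
    · field_simp
    · field_simp
      ring

/-- Painlevé VI similarity ansatz for the H1 reduced system. -/
theorem similarity_ansatz_PVI_H1
    (n m : ℤ) (μ : ℝ) (I : Set ℝ) (hI : IsOpen I) (hIc : I.OrdConnected)
    (hIpos : I ⊆ Set.Ioi (0 : ℝ)) (S S1 S2 : ℝ → ℝ)
    (hS : ContDiffOn ℝ 2 S I) (hS1 : ContDiffOn ℝ 2 S1 I) (hS2 : ContDiffOn ℝ 2 S2 I) :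
    (∀ p : ℝ × ℝ, 0 < p.1 → 0 < p.2 → p.1 ≠ p.2 → p.1 / p.2 ∈ I →
      SigmaH1 n m
        (fun q => S (q.1 / q.2) * (q.1 * q.2) ^ μ)
        (fun q => S1 (q.1 / q.2) * (q.1 * q.2) ^ (1 / 2 - μ))
        (fun q => S2 (q.1 / q.2) * (q.1 * q.2) ^ (1 / 2 - μ)) p) ↔
    (∀ y ∈ I \ {1}, sysH1redPVI n m μ S S1 S2 y) := by
  constructor
  · intro h y hy
    obtain ⟨hyI, hy1⟩ := hy
    have hy1' : y ≠ 1 := by simpa using hy1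
    have hy0 : 0 < y := hIpos hyI
    have h1 : y / (1 : ℝ) ∈ I := by rwa [div_one]
    have := (key n m μ I hI S S1 S2 hS hS1 hS2 y 1 hy0 one_pos hy1' h1).mp
      (h (y, 1) hy0 one_pos hy1' h1)
    rwa [div_one] at this
  · intro h p hp1 hp2 hp3 hp4
    obtain ⟨a, b⟩ := p
    have hy1 : a / b ≠ 1 := fun hc => hp3 (by field_simp at hc; exact hc)
    exact (key n m μ I hI S S1 S2 hS hS1 hS2 a b hp1 hp2 hp3 hp4).mpr (h _ ⟨hp4, hy1⟩)
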